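/- Suppose B = B(H), the bounded operators on a complex Hilbert space H. An element C ∈ M₂(ℂ)^{⊗L} ⊗ M₂(ℂ)^{⊗M} ⊗ B(H) commutes with every T_i and every T_i* if and only if C = 1 ⊗ 1 ⊗ C' for some C' ∈ B(H) commuting with every v_i, i ∈ M ⊔ R. In particular, the family (T_i)_{i=1}^{n} acts irreducibly (its commutant is the scalar multiples of the identity) if and only if the family (v_i)_{i∈M⊔R} acts irreducibly on H. -/

import Mathlib

open Complex Matrix

noncomputable section

/-- Index set of the tensor factor `(ℂ²)^{⊗L} ⊗ (ℂ²)^{⊗M}`. -/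
abbrev Jidx {n : ℕ} (L M : Finset (Fin n)) : Type := {k : Fin n // k ∈ L ∪ M} → Fin 2

variable {n : ℕ} {B : Type*} [Ring B] [Algebra ℂ B] [StarRing B] [StarModule ℂ B]

/-- The operator `e = [[0,1],[0,0]]` acting in the `k`-th slot (and `0` for `k ∉ L ∪ M`). -/
def Ek (L M : Finset (Fin n)) (k : Fin n) : Matrix (Jidx L M) (Jidx L M) B :=
  if h : k ∈ L ∪ M then
    Matrix.of (fun σ τ : Jidx L M =>
      if τ ⟨k, h⟩ = 1 ∧ σ = Function.update τ ⟨k, h⟩ 0 then (1 : B) else 0)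
  else 0

/-- The element `1 ⊗ 1 ⊗ b`. -/
def scalarMat (L M : Finset (Fin n)) (b : B) : Matrix (Jidx L M) (Jidx L M) B :=
  Matrix.diagonal (fun _ => b)

/-- Ordered product of matrices indexed by a finset of `Fin n`. -/
def prodOver {L M : Finset (Fin n)} (s : Finset (Fin n))
    (f : Fin n → Matrix (Jidx L M) (Jidx L M) B) : Matrix (Jidx L M) (Jidx L M) B :=
  ((s.sort (· ≤ ·)).map f).prod

/-- The skew-symmetric matrix `Σ` built from `Θ` and the partition `L ⊔ M ⊔ R`. -/
def SigMat (M R : Finset (Fin n)) (Θ : Matrix (Fin n) (Fin n) ℝ) :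
    Matrix (Fin n) (Fin n) ℝ :=
  fun i j =>
    if i ∈ M ∧ j ∈ M then 4 * Θ i j
    else if (i ∈ M ∧ j ∈ R) ∨ (i ∈ R ∧ j ∈ M) then 2 * Θ i j
    else Θ i j

/-- The operators `T_i` of the representation `τ_x` of `CAR_Θ`. -/
def carOp (L M : Finset (Fin n)) (Θ : Matrix (Fin n) (Fin n) ℝ) (x : Fin n → ℝ)
    (v : Fin n → B) (i : Fin n) : Matrix (Jidx L M) (Jidx L M) B :=
  if i ∈ L then
    prodOver L (fun k => Ek L M k * star (Ek L M k) +
        Complex.exp (Real.pi * Complex.I * (Θ i k : ℂ)) • (star (Ek L M k) * Ek L M k)) *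
      Ek L M i
  else if i ∈ M then
    prodOver L (fun k => Ek L M k * star (Ek L M k) +
        Complex.exp (Real.pi * Complex.I * (Θ i k : ℂ)) • (star (Ek L M k) * Ek L M k)) *
    prodOver (M.filter (· < i)) (fun k => star (Ek L M k) * Ek L M k +
        Complex.exp (2 * Real.pi * Complex.I * (Θ i k : ℂ)) • (Ek L M k * star (Ek L M k))) *
    ((Real.sqrt (x i) : ℂ) •
        (prodOver (M.filter (i ≤ ·)) (fun k => star (Ek L M k) * Ek L M k +
            Complex.exp (4 * Real.pi * Complex.I * (Θ i k : ℂ)) •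
              (Ek L M k * star (Ek L M k))) *
          Ek L M i * scalarMat L M (v i)) +
      (Real.sqrt (1 - x i) : ℂ) • star (Ek L M i))
  else
    prodOver L (fun k => Ek L M k * star (Ek L M k) +
        Complex.exp (Real.pi * Complex.I * (Θ i k : ℂ)) • (star (Ek L M k) * Ek L M k)) *
    prodOver M (fun k => star (Ek L M k) * Ek L M k +
        Complex.exp (2 * Real.pi * Complex.I * (Θ i k : ℂ)) • (Ek L M k * star (Ek L M k))) *
    ((Real.sqrt 2 : ℂ)⁻¹ • scalarMat L M (v i))

section Aux1
set_option linter.unusedSectionVars false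
variable {n : ℕ} {L M : Finset (Fin n)} {B : Type*} [Ring B] [Algebra ℂ B] [StarRing B]
  [StarModule ℂ B]

/-- Projection onto the states with `σ κ = a`. -/
def Pj (L M : Finset (Fin n)) (κ : {k : Fin n // k ∈ L ∪ M}) (a : Fin 2) :
    Matrix (Jidx L M) (Jidx L M) B :=
  Matrix.diagonal (fun σ => if σ κ = a then 1 else 0)

lemma fin2_cases (a : Fin 2) : a = 0 ∨ a = 1 := by fin_cases a <;> simp

lemma Ek_apply {k : Fin n} (h : k ∈ L ∪ M) (σ τ : Jidx L M) :
    (Ek L M k : Matrix (Jidx L M) (Jidx L M) B) σ τ =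
      if τ ⟨k, h⟩ = 1 ∧ σ = Function.update τ ⟨k, h⟩ 0 then 1 else 0 := by
  rw [Ek, dif_pos h]; rfl

lemma cond_iff {κ : {k : Fin n // k ∈ L ∪ M}} {σ τ : Jidx L M} :
    (τ κ = 1 ∧ σ = Function.update τ κ 0) ↔ (σ κ = 0 ∧ τ = Function.update σ κ 1) := by
  constructor
  · rintro ⟨h1, rfl⟩
    refine ⟨by simp, ?_⟩
    funext j
    by_cases hj : j = κ
    · subst hj; simp [h1]
    · simp [Function.update_of_ne hj]
  · rintro ⟨h1, rfl⟩
    refine ⟨by simp, ?_⟩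
    funext j
    by_cases hj : j = κ
    · subst hj; simp [h1]
    · simp [Function.update_of_ne hj]

lemma Ek_apply' {k : Fin n} (h : k ∈ L ∪ M) (σ τ : Jidx L M) :
    (Ek L M k : Matrix (Jidx L M) (Jidx L M) B) σ τ =
      if σ ⟨k, h⟩ = 0 ∧ τ = Function.update σ ⟨k, h⟩ 1 then 1 else 0 := by
  rw [Ek_apply h]
  congr 1
  exact propext cond_iff

lemma star_Ek_apply {k : Fin n} (h : k ∈ L ∪ M) (σ τ : Jidx L M) :
    (star (Ek L M k) : Matrix (Jidx L M) (Jidx L M) B) σ τ =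
      if σ ⟨k, h⟩ = 1 ∧ τ = Function.update σ ⟨k, h⟩ 0 then 1 else 0 := by
  rw [Matrix.star_apply, Ek_apply h]
  split_ifs <;> simp

lemma star_Ek_apply' {k : Fin n} (h : k ∈ L ∪ M) (σ τ : Jidx L M) :
    (star (Ek L M k) : Matrix (Jidx L M) (Jidx L M) B) σ τ =
      if τ ⟨k, h⟩ = 0 ∧ σ = Function.update τ ⟨k, h⟩ 1 then 1 else 0 := by
  rw [star_Ek_apply h]
  congr 1
  exact propext cond_iff

lemma Ek_mul_apply {k : Fin n} (h : k ∈ L ∪ M) (X : Matrix (Jidx L M) (Jidx L M) B)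
    (σ τ : Jidx L M) :
    (Ek L M k * X : Matrix (Jidx L M) (Jidx L M) B) σ τ =
      if σ ⟨k, h⟩ = 0 then X (Function.update σ ⟨k, h⟩ 1) τ else 0 := by
  rw [Matrix.mul_apply]
  by_cases h0 : σ ⟨k, h⟩ = 0
  · simp [Ek_apply' h, h0, Finset.sum_ite_eq]
  · simp [Ek_apply' h, h0]

lemma mul_Ek_apply {k : Fin n} (h : k ∈ L ∪ M) (X : Matrix (Jidx L M) (Jidx L M) B)
    (σ τ : Jidx L M) :
    (X * Ek L M k : Matrix (Jidx L M) (Jidx L M) B) σ τ =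
      if τ ⟨k, h⟩ = 1 then X σ (Function.update τ ⟨k, h⟩ 0) else 0 := by
  rw [Matrix.mul_apply]
  by_cases h0 : τ ⟨k, h⟩ = 1
  · simp [Ek_apply h, h0, Finset.sum_ite_eq]
  · simp [Ek_apply h, h0]

lemma starEk_mul_apply {k : Fin n} (h : k ∈ L ∪ M) (X : Matrix (Jidx L M) (Jidx L M) B)
    (σ τ : Jidx L M) :
    (star (Ek L M k) * X : Matrix (Jidx L M) (Jidx L M) B) σ τ =
      if σ ⟨k, h⟩ = 1 then X (Function.update σ ⟨k, h⟩ 0) τ else 0 := by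
  rw [Matrix.mul_apply]
  by_cases h0 : σ ⟨k, h⟩ = 1
  · simp [star_Ek_apply h, h0, Finset.sum_ite_eq]
  · simp [star_Ek_apply h, h0]

lemma mul_starEk_apply {k : Fin n} (h : k ∈ L ∪ M) (X : Matrix (Jidx L M) (Jidx L M) B)
    (σ τ : Jidx L M) :
    (X * star (Ek L M k) : Matrix (Jidx L M) (Jidx L M) B) σ τ =
      if τ ⟨k, h⟩ = 0 then X σ (Function.update τ ⟨k, h⟩ 1) else 0 := by
  rw [Matrix.mul_apply]
  by_cases h0 : τ ⟨k, h⟩ = 0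
  · simp [star_Ek_apply' h, h0, Finset.sum_ite_eq]
  · simp [star_Ek_apply' h, h0]

end Aux1
section Aux2
set_option linter.unusedSectionVars false
variable {n : ℕ} {L M : Finset (Fin n)} {B : Type*} [Ring B] [Algebra ℂ B] [StarRing B]
  [StarModule ℂ B]

lemma Ek_mul_starEk {k : Fin n} (h : k ∈ L ∪ M) :
    (Ek L M k * star (Ek L M k) : Matrix (Jidx L M) (Jidx L M) B) = Pj L M ⟨k, h⟩ 0 := by
  ext σ τ
  rw [Ek_mul_apply h, Pj]
  by_cases h0 : σ ⟨k, h⟩ = 0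
  · rw [if_pos h0, star_Ek_apply h]
    by_cases hst : σ = τ
    · subst hst
      rw [Matrix.diagonal_apply_eq, if_pos h0, if_pos]
      refine ⟨by simp, ?_⟩
      funext j
      by_cases hj : j = (⟨k, h⟩ : {k : Fin n // k ∈ L ∪ M})
      · subst hj; simp [h0]
      · simp [Function.update_of_ne hj]
    · rw [Matrix.diagonal_apply_ne _ hst, if_neg]
      rintro ⟨-, h2⟩
      apply hst
      funext j
      by_cases hj : j = (⟨k, h⟩ : {k : Fin n // k ∈ L ∪ M})
      · subst hj
        have := congrFun h2 (⟨k, h⟩ : {k : Fin n // k ∈ L ∪ M})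
        simpa [h0] using this.symm
      · have := congrFun h2 j
        simpa [Function.update_of_ne hj] using this.symm
  · rw [if_neg h0]
    by_cases hst : σ = τ
    · subst hst; rw [Matrix.diagonal_apply_eq, if_neg h0]
    · rw [Matrix.diagonal_apply_ne _ hst]

lemma starEk_mul_Ek {k : Fin n} (h : k ∈ L ∪ M) :
    (star (Ek L M k) * Ek L M k : Matrix (Jidx L M) (Jidx L M) B) = Pj L M ⟨k, h⟩ 1 := by
  ext σ τ
  rw [starEk_mul_apply h, Pj]
  by_cases h0 : σ ⟨k, h⟩ = 1
  · rw [if_pos h0, Ek_apply' h]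
    by_cases hst : σ = τ
    · subst hst
      rw [Matrix.diagonal_apply_eq, if_pos h0, if_pos]
      refine ⟨by simp, ?_⟩
      funext j
      by_cases hj : j = (⟨k, h⟩ : {k : Fin n // k ∈ L ∪ M})
      · subst hj; simp [h0]
      · simp [Function.update_of_ne hj]
    · rw [Matrix.diagonal_apply_ne _ hst, if_neg]
      rintro ⟨-, h2⟩
      apply hst
      funext j
      by_cases hj : j = (⟨k, h⟩ : {k : Fin n // k ∈ L ∪ M})
      · subst hj
        have := congrFun h2 (⟨k, h⟩ : {k : Fin n // k ∈ L ∪ M})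
        simpa [h0] using this.symm
      · have := congrFun h2 j
        simpa [Function.update_of_ne hj] using this.symm
  · rw [if_neg h0]
    by_cases hst : σ = τ
    · subst hst; rw [Matrix.diagonal_apply_eq, if_neg h0]
    · rw [Matrix.diagonal_apply_ne _ hst]

lemma Ek_mul_Ek {k : Fin n} :
    (Ek L M k * Ek L M k : Matrix (Jidx L M) (Jidx L M) B) = 0 := by
  by_cases h : k ∈ L ∪ M
  · ext σ τ
    rw [Ek_mul_apply h]
    by_cases h0 : σ ⟨k, h⟩ = 0
    · rw [if_pos h0, Ek_apply' h, if_neg, Matrix.zero_apply]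
      rintro ⟨h1, -⟩
      simp at h1
    · rw [if_neg h0, Matrix.zero_apply]
  · rw [Ek, dif_neg h, zero_mul]

lemma starEk_mul_starEk {k : Fin n} :
    (star (Ek L M k) * star (Ek L M k) : Matrix (Jidx L M) (Jidx L M) B) = 0 := by
  have := congrArg star (Ek_mul_Ek (L := L) (M := M) (B := B) (k := k))
  rwa [Matrix.star_mul, star_zero] at this

lemma Ek_mul_diag_mul_Ek {k : Fin n} (d : Jidx L M → B) :
    (Ek L M k * Matrix.diagonal d * Ek L M k : Matrix (Jidx L M) (Jidx L M) B) = 0 := by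
  by_cases h : k ∈ L ∪ M
  · ext σ τ
    rw [mul_Ek_apply h]
    by_cases h0 : τ ⟨k, h⟩ = 1
    · rw [if_pos h0, Matrix.zero_apply]
      rw [Matrix.mul_apply]
      apply Finset.sum_eq_zero
      intro ρ _
      rw [Ek_apply' h]
      by_cases hc : σ ⟨k, h⟩ = 0 ∧ ρ = Function.update σ ⟨k, h⟩ 1
      · rw [if_pos hc, one_mul]
        obtain ⟨h1, rfl⟩ := hc
        rw [Matrix.diagonal_apply_ne]
        intro heq
        have := congrFun heq ⟨k, h⟩
        simp [h0] at this
      · rw [if_neg hc, zero_mul]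
    · rw [if_neg h0, Matrix.zero_apply]
  · rw [Ek, dif_neg h, zero_mul, zero_mul]

lemma starEk_mul_diag_mul_starEk {k : Fin n} (d : Jidx L M → B) :
    (star (Ek L M k) * Matrix.diagonal d * star (Ek L M k) :
      Matrix (Jidx L M) (Jidx L M) B) = 0 := by
  by_cases h : k ∈ L ∪ M
  · ext σ τ
    rw [mul_starEk_apply h]
    by_cases h0 : τ ⟨k, h⟩ = 0
    · rw [if_pos h0, Matrix.zero_apply]
      rw [Matrix.mul_apply]
      apply Finset.sum_eq_zero
      intro ρ _
      rw [star_Ek_apply h]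
      by_cases hc : σ ⟨k, h⟩ = 1 ∧ ρ = Function.update σ ⟨k, h⟩ 0
      · rw [if_pos hc, one_mul]
        obtain ⟨h1, rfl⟩ := hc
        rw [Matrix.diagonal_apply_ne]
        intro heq
        have := congrFun heq ⟨k, h⟩
        simp [h0] at this
      · rw [if_neg hc, zero_mul]
    · rw [if_neg h0, Matrix.zero_apply]
  · rw [Ek, dif_neg h, star_zero, zero_mul, zero_mul]

lemma Ek_mul_Pj1 {k : Fin n} (h : k ∈ L ∪ M) :
    (Ek L M k * Pj L M ⟨k, h⟩ 1 : Matrix (Jidx L M) (Jidx L M) B) = Ek L M k := by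
  ext σ τ
  rw [Pj, Matrix.mul_diagonal, Ek_apply h]
  by_cases hc : τ ⟨k, h⟩ = 1 ∧ σ = Function.update τ ⟨k, h⟩ 0
  · rw [if_pos hc, if_pos hc.1, one_mul]
  · rw [if_neg hc, zero_mul]

lemma Ek_mul_Pj0 {k : Fin n} (h : k ∈ L ∪ M) :
    (Ek L M k * Pj L M ⟨k, h⟩ 0 : Matrix (Jidx L M) (Jidx L M) B) = 0 := by
  ext σ τ
  rw [Pj, Matrix.mul_diagonal, Ek_apply h, Matrix.zero_apply]
  by_cases hc : τ ⟨k, h⟩ = 1 ∧ σ = Function.update τ ⟨k, h⟩ 0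
  · rw [if_pos hc, if_neg (by simp [hc.1]), one_mul]
  · rw [if_neg hc, zero_mul]

lemma starEk_mul_Pj0 {k : Fin n} (h : k ∈ L ∪ M) :
    (star (Ek L M k) * Pj L M ⟨k, h⟩ 0 : Matrix (Jidx L M) (Jidx L M) B) =
      star (Ek L M k) := by
  ext σ τ
  rw [Pj, Matrix.mul_diagonal, star_Ek_apply' h]
  by_cases hc : τ ⟨k, h⟩ = 0 ∧ σ = Function.update τ ⟨k, h⟩ 1
  · rw [if_pos hc, if_pos hc.1, one_mul]
  · rw [if_neg hc, zero_mul]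

lemma starEk_mul_Pj1 {k : Fin n} (h : k ∈ L ∪ M) :
    (star (Ek L M k) * Pj L M ⟨k, h⟩ 1 : Matrix (Jidx L M) (Jidx L M) B) = 0 := by
  ext σ τ
  rw [Pj, Matrix.mul_diagonal, star_Ek_apply' h, Matrix.zero_apply]
  by_cases hc : τ ⟨k, h⟩ = 0 ∧ σ = Function.update τ ⟨k, h⟩ 1
  · rw [if_pos hc, if_neg (by simp [hc.1]), one_mul]
  · rw [if_neg hc, zero_mul]

lemma Pj_comm_diagonal (κ : {k : Fin n // k ∈ L ∪ M}) (a : Fin 2) (d : Jidx L M → B) :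
    (Pj L M κ a * Matrix.diagonal d : Matrix (Jidx L M) (Jidx L M) B) =
      Matrix.diagonal d * Pj L M κ a := by
  rw [Pj, Matrix.diagonal_mul_diagonal, Matrix.diagonal_mul_diagonal]
  refine congrArg Matrix.diagonal ?_
  funext σ
  split_ifs <;> simp

lemma Pj0_eq_one_sub (κ : {k : Fin n // k ∈ L ∪ M}) :
    (Pj L M κ 0 : Matrix (Jidx L M) (Jidx L M) B) = 1 - Pj L M κ 1 := by
  rw [Pj, Pj, ← Matrix.diagonal_one, Matrix.diagonal_sub]
  refine congrArg Matrix.diagonal ?_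
  funext σ
  rcases fin2_cases (σ κ) with h | h <;> simp [h]

end Aux2
section Aux3
set_option linter.unusedSectionVars false
variable {n : ℕ} {L M : Finset (Fin n)} {B : Type*} [Ring B] [Algebra ℂ B] [StarRing B]
  [StarModule ℂ B]

/-- A diagonal matrix with unimodular scalar entries. -/
def IsUD (D : Matrix (Jidx L M) (Jidx L M) B) : Prop :=
  ∃ g : Jidx L M → ℂ, (∀ σ, g σ * star (g σ) = 1) ∧
    D = Matrix.diagonal (fun σ => algebraMap ℂ B (g σ))

lemma isUD_one : IsUD (1 : Matrix (Jidx L M) (Jidx L M) B) := by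
  refine ⟨fun _ => 1, fun σ => by simp, ?_⟩
  rw [← Matrix.diagonal_one]
  refine congrArg Matrix.diagonal ?_
  funext σ
  simp

lemma IsUD.mul {D E : Matrix (Jidx L M) (Jidx L M) B} (hD : IsUD D) (hE : IsUD E) :
    IsUD (D * E) := by
  obtain ⟨g1, h1, rfl⟩ := hD
  obtain ⟨g2, h2, rfl⟩ := hE
  refine ⟨fun σ => g1 σ * g2 σ, fun σ => ?_, ?_⟩
  · calc g1 σ * g2 σ * star (g1 σ * g2 σ)
        = (g1 σ * star (g1 σ)) * (g2 σ * star (g2 σ)) := by rw [StarMul.star_mul]; ring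
      _ = 1 := by rw [h1, h2, one_mul]
  · rw [Matrix.diagonal_mul_diagonal]
    refine congrArg Matrix.diagonal ?_
    funext σ
    dsimp only
    rw [_root_.map_mul]

lemma IsUD.star_ud {D : Matrix (Jidx L M) (Jidx L M) B} (hD : IsUD D) : IsUD (star D) := by
  obtain ⟨g, hg, rfl⟩ := hD
  refine ⟨fun σ => star (g σ), fun σ => by dsimp only; rw [star_star, mul_comm]; exact hg σ, ?_⟩
  rw [Matrix.star_eq_conjTranspose, Matrix.diagonal_conjTranspose]
  refine congrArg Matrix.diagonal ?_
  funext σ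
  dsimp only
  rw [Pi.star_apply, algebraMap_star_comm]

lemma IsUD.star_mul_self {D : Matrix (Jidx L M) (Jidx L M) B} (hD : IsUD D) :
    star D * D = 1 := by
  obtain ⟨g, hg, rfl⟩ := hD
  rw [Matrix.star_eq_conjTranspose, Matrix.diagonal_conjTranspose,
    Matrix.diagonal_mul_diagonal, ← Matrix.diagonal_one]
  refine congrArg Matrix.diagonal ?_
  funext σ
  rw [Pi.star_apply, ← algebraMap_star_comm, ← _root_.map_mul]
  rw [mul_comm, hg σ, _root_.map_one]

lemma IsUD.mul_star_self {D : Matrix (Jidx L M) (Jidx L M) B} (hD : IsUD D) :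
    D * star D = 1 := by
  have := hD.star_ud.star_mul_self
  rwa [star_star] at this

lemma IsUD.commute_diagonal {D : Matrix (Jidx L M) (Jidx L M) B} (hD : IsUD D)
    (d : Jidx L M → B) : D * Matrix.diagonal d = Matrix.diagonal d * D := by
  obtain ⟨g, hg, rfl⟩ := hD
  rw [Matrix.diagonal_mul_diagonal, Matrix.diagonal_mul_diagonal]
  refine congrArg Matrix.diagonal ?_
  funext σ
  exact Algebra.commutes (g σ) (d σ)

lemma isUD_listProd (f : Fin n → Matrix (Jidx L M) (Jidx L M) B) :
    ∀ l : List (Fin n), (∀ k ∈ l, IsUD (f k)) → IsUD ((l.map f).prod)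
  | [], _ => by simpa using isUD_one
  | k :: l, h => by
    rw [List.map_cons, List.prod_cons]
    exact (h k (by simp)).mul
      (isUD_listProd f l (fun j hj => h j (List.mem_cons_of_mem _ hj)))

lemma isUD_prodOver {s : Finset (Fin n)} {f : Fin n → Matrix (Jidx L M) (Jidx L M) B}
    (h : ∀ k ∈ s, IsUD (f k)) : IsUD (prodOver s f) := by
  rw [prodOver]
  exact isUD_listProd f _ (fun k hk => h k ((Finset.mem_sort _).1 hk))

lemma exp_unit {z : ℂ} (hz : star z = -z) :
    Complex.exp z * star (Complex.exp z) = 1 := by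
  rw [Complex.star_def, ← Complex.exp_conj]
  have : (starRingEnd ℂ) z = -z := hz
  rw [this, ← Complex.exp_add, add_neg_cancel, Complex.exp_zero]

lemma star_exp_theta (a θ : ℝ) : star ((a : ℂ) * Complex.I * (θ : ℂ)) =
    -((a : ℂ) * Complex.I * (θ : ℂ)) := by
  rw [Complex.star_def]
  simp only [_root_.map_mul, Complex.conj_I, Complex.conj_ofReal]
  ring

lemma isUD_factorL {k : Fin n} (h : k ∈ L ∪ M) {c : ℂ} (hc : c * star c = 1) :
    IsUD (Ek L M k * star (Ek L M k) + c • (star (Ek L M k) * Ek L M k) :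
      Matrix (Jidx L M) (Jidx L M) B) := by
  refine ⟨fun σ => if σ ⟨k, h⟩ = 0 then 1 else c, fun σ => ?_, ?_⟩
  · have hc' : c * (starRingEnd ℂ) c = 1 := hc
    dsimp only
    split_ifs <;> simp [hc']
  · rw [Ek_mul_starEk h, starEk_mul_Ek h, Pj, Pj, ← Matrix.diagonal_smul,
      Matrix.diagonal_add]
    refine congrArg Matrix.diagonal ?_
    funext σ
    rcases fin2_cases (σ ⟨k, h⟩) with h0 | h0 <;>
      simp [h0, Algebra.algebraMap_eq_smul_one]

lemma isUD_factorM {k : Fin n} (h : k ∈ L ∪ M) {c : ℂ} (hc : c * star c = 1) :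
    IsUD (star (Ek L M k) * Ek L M k + c • (Ek L M k * star (Ek L M k)) :
      Matrix (Jidx L M) (Jidx L M) B) := by
  refine ⟨fun σ => if σ ⟨k, h⟩ = 1 then 1 else c, fun σ => ?_, ?_⟩
  · have hc' : c * (starRingEnd ℂ) c = 1 := hc
    dsimp only
    split_ifs <;> simp [hc']
  · rw [Ek_mul_starEk h, starEk_mul_Ek h, Pj, Pj, ← Matrix.diagonal_smul,
      Matrix.diagonal_add]
    refine congrArg Matrix.diagonal ?_
    funext σ
    rcases fin2_cases (σ ⟨k, h⟩) with h0 | h0 <;>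
      simp [h0, Algebra.algebraMap_eq_smul_one]

/-- The three kinds of prefactor products appearing in `carOp` are unitary diagonals. -/
lemma isUD_prefactorL (Θ : Matrix (Fin n) (Fin n) ℝ) (i : Fin n) :
    IsUD (prodOver L (fun k => Ek L M k * star (Ek L M k) +
      Complex.exp (Real.pi * Complex.I * (Θ i k : ℂ)) • (star (Ek L M k) * Ek L M k)) :
      Matrix (Jidx L M) (Jidx L M) B) := by
  refine isUD_prodOver (fun k hk => isUD_factorL (Finset.mem_union_left _ hk) ?_)
  exact exp_unit (star_exp_theta Real.pi (Θ i k))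

lemma isUD_prefactorM {s : Finset (Fin n)} (hs : s ⊆ M) (a : ℝ)
    (Θ : Matrix (Fin n) (Fin n) ℝ) (i : Fin n) :
    IsUD (prodOver s (fun k => star (Ek L M k) * Ek L M k +
      Complex.exp ((a : ℂ) * Real.pi * Complex.I * (Θ i k : ℂ)) •
        (Ek L M k * star (Ek L M k))) : Matrix (Jidx L M) (Jidx L M) B) := by
  refine isUD_prodOver (fun k hk => isUD_factorM
    (Finset.mem_union_right _ (hs hk)) ?_)
  have : (a : ℂ) * (Real.pi : ℂ) * Complex.I * (Θ i k : ℂ) =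
      ((a * Real.pi : ℝ) : ℂ) * Complex.I * (Θ i k : ℂ) := by
    push_cast; ring
  rw [this]
  exact exp_unit (star_exp_theta (a * Real.pi) (Θ i k))

end Aux3
section Aux4
set_option linter.unusedSectionVars false
variable {n : ℕ} {L M : Finset (Fin n)} {B : Type*} [Ring B] [Algebra ℂ B] [StarRing B]
  [StarModule ℂ B]

lemma cancel_left {D X C : Matrix (Jidx L M) (Jidx L M) B} (hD : IsUD D)
    (hCD : C * D = D * C) (h : C * (D * X) = D * X * C) : C * X = X * C := by
  have h2 : D * (C * X) = D * (X * C) := by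
    calc D * (C * X) = (D * C) * X := by rw [mul_assoc]
      _ = (C * D) * X := by rw [hCD]
      _ = C * (D * X) := by rw [mul_assoc]
      _ = D * X * C := h
      _ = D * (X * C) := by rw [mul_assoc]
  calc C * X = (star D * D) * (C * X) := by rw [hD.star_mul_self, one_mul]
    _ = star D * (D * (X * C)) := by rw [mul_assoc, h2]
    _ = (star D * D) * (X * C) := by rw [mul_assoc]
    _ = X * C := by rw [hD.star_mul_self, one_mul]

lemma smul_cancel {c : ℂ} (hc : c ≠ 0) {X Y : Matrix (Jidx L M) (Jidx L M) B}
    (h : c • X = c • Y) : X = Y := by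
  have := congrArg (fun Z => c⁻¹ • Z) h
  simpa [inv_smul_smul₀ hc] using this

lemma smul_comm_cancel {c : ℂ} (hc : c ≠ 0) {X C : Matrix (Jidx L M) (Jidx L M) B}
    (h : C * (c • X) = (c • X) * C) : C * X = X * C := by
  apply smul_cancel hc
  rw [Matrix.mul_smul, Matrix.smul_mul] at h
  exact h

lemma comm_mul {C X Y : Matrix (Jidx L M) (Jidx L M) B} (hX : C * X = X * C)
    (hY : C * Y = Y * C) : C * (X * Y) = (X * Y) * C := by
  rw [← mul_assoc, hX, mul_assoc, hY, ← mul_assoc]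

/-- From commutation with `a•P + b•(1-P)`, `a ≠ b`, get commutation with `P`. -/
lemma comm_of_combo {C P : Matrix (Jidx L M) (Jidx L M) B} {a b : ℂ} (hab : a ≠ b)
    (h : C * (a • P + b • (1 - P)) = (a • P + b • (1 - P)) * C) : C * P = P * C := by
  have key : a • P + b • (1 - P) = b • (1 : Matrix (Jidx L M) (Jidx L M) B) + (a - b) • P := by
    rw [smul_sub, sub_smul]
    abel
  rw [key] at h
  rw [mul_add, add_mul, Matrix.mul_smul, Matrix.mul_smul, Matrix.smul_mul,
    Matrix.smul_mul, mul_one, one_mul] at h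
  have h2 : (a - b) • (C * P) = (a - b) • (P * C) := by
    have := add_left_cancel h
    exact this
  have hab' : a - b ≠ 0 := sub_ne_zero.2 hab
  apply smul_cancel hab' h2

lemma scalarMat_mul (a b : B) :
    (scalarMat L M a * scalarMat L M b : Matrix (Jidx L M) (Jidx L M) B) =
      scalarMat L M (a * b) := by
  rw [scalarMat, scalarMat, scalarMat, Matrix.diagonal_mul_diagonal]

lemma scalarMat_one : (scalarMat L M (1 : B)) = (1 : Matrix (Jidx L M) (Jidx L M) B) := by
  rw [scalarMat, Matrix.diagonal_one]

lemma star_scalarMat (b : B) :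
    star (scalarMat L M b) = (scalarMat L M (star b) : Matrix (Jidx L M) (Jidx L M) B) := by
  rw [scalarMat, scalarMat, Matrix.star_eq_conjTranspose, Matrix.diagonal_conjTranspose]
  rfl

lemma scalarMat_comm_Ek (b : B) (k : Fin n) :
    (scalarMat L M b * Ek L M k : Matrix (Jidx L M) (Jidx L M) B) =
      Ek L M k * scalarMat L M b := by
  by_cases h : k ∈ L ∪ M
  · ext σ τ
    rw [scalarMat, Matrix.diagonal_mul, Matrix.mul_diagonal, Ek_apply h]
    split_ifs <;> simp
  · rw [Ek, dif_neg h, mul_zero, zero_mul]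

lemma scalarMat_comm_starEk (b : B) (k : Fin n) :
    (scalarMat L M b * star (Ek L M k) : Matrix (Jidx L M) (Jidx L M) B) =
      star (Ek L M k) * scalarMat L M b := by
  have := congrArg star (scalarMat_comm_Ek (L := L) (M := M) (star b) k)
  rw [Matrix.star_mul, Matrix.star_mul, star_scalarMat, star_star] at this
  exact this.symm

lemma scalarMat_comm_diagonal (b : B) {D : Matrix (Jidx L M) (Jidx L M) B} (hD : IsUD D) :
    scalarMat L M b * D = D * scalarMat L M b := by
  rw [scalarMat]
  exact (hD.commute_diagonal _).symm

lemma scalarMat_comm_Pj (b : B) (κ : {k : Fin n // k ∈ L ∪ M}) (a : Fin 2) :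
    (scalarMat L M b * Pj L M κ a : Matrix (Jidx L M) (Jidx L M) B) =
      Pj L M κ a * scalarMat L M b := by
  rw [scalarMat]
  exact (Pj_comm_diagonal κ a _).symm

/-- Expansion of `star S * S` for `S = a•X + b•Y` with orthogonality relations. -/
lemma star_expand {X Y P Q : Matrix (Jidx L M) (Jidx L M) B} (a b : ℂ)
    (hXX : star X * X = P) (hYY : star Y * Y = Q)
    (hXY : star X * Y = 0) (hYX : star Y * X = 0) :
    star (a • X + b • Y) * (a • X + b • Y) = (star a * a) • P + (star b * b) • Q := by
  rw [star_add, star_smul, star_smul, add_mul, mul_add, mul_add]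
  rw [Matrix.smul_mul, Matrix.smul_mul, Matrix.smul_mul, Matrix.smul_mul,
    Matrix.mul_smul, Matrix.mul_smul, Matrix.mul_smul, Matrix.mul_smul,
    hXX, hYY, hXY, hYX, smul_zero, smul_zero, smul_zero, smul_zero,
    add_zero, zero_add, smul_smul, smul_smul]

/-- A matrix commuting with all the projections `Pj κ 1` is diagonal. -/
lemma diagonal_of_comm {C : Matrix (Jidx L M) (Jidx L M) B}
    (h : ∀ κ : {k : Fin n // k ∈ L ∪ M}, C * Pj L M κ 1 = Pj L M κ 1 * C) :
    C = Matrix.diagonal (fun σ => C σ σ) := by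
  ext σ τ
  by_cases hst : σ = τ
  · subst hst; rw [Matrix.diagonal_apply_eq]
  · rw [Matrix.diagonal_apply_ne _ hst]
    obtain ⟨κ, hκ⟩ : ∃ κ, σ κ ≠ τ κ := by
      by_contra hco
      push_neg at hco
      exact hst (funext hco)
    have hent : (C * Pj L M κ 1 : Matrix (Jidx L M) (Jidx L M) B) σ τ =
        (Pj L M κ 1 * C : Matrix (Jidx L M) (Jidx L M) B) σ τ := by rw [h κ]
    rw [Pj, Matrix.mul_diagonal, Matrix.diagonal_mul] at hent
    rcases fin2_cases (σ κ) with h0 | h0 <;> rcases fin2_cases (τ κ) with h1 | h1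
    · exact absurd (h0.trans h1.symm) hκ
    · rw [if_pos h1, if_neg (by rw [h0]; decide), mul_one, zero_mul] at hent
      exact hent
    · rw [if_neg (by rw [h1]; decide), if_pos h0, mul_zero, one_mul] at hent
      exact hent.symm
    · exact absurd (h0.trans h1.symm) hκ

/-- Constancy from single-coordinate update relations. -/
lemma const_of_upd {c : Jidx L M → B}
    (h : ∀ (κ : {k : Fin n // k ∈ L ∪ M}) (τ : Jidx L M), τ κ = 1 →
      c (Function.update τ κ 0) = c τ) :
    ∀ τ : Jidx L M, c τ = c (fun _ => 0) := by
  intro τ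
  generalize hm : (Finset.univ.filter (fun κ => τ κ = 1)).card = m
  induction m generalizing τ with
  | zero =>
    have h0 : ∀ κ, τ κ = 0 := by
      intro κ
      rcases fin2_cases (τ κ) with h1 | h1
      · exact h1
      · exfalso
        have : κ ∈ Finset.univ.filter (fun κ => τ κ = 1) := by
          simp [Finset.mem_filter, h1]
        rw [Finset.card_eq_zero] at hm
        rw [hm] at this
        exact absurd this (Finset.notMem_empty κ)
    exact congrArg c (funext h0)
  | succ m ih =>
    have hne : (Finset.univ.filter (fun κ => τ κ = 1)).Nonempty := by
      rw [← Finset.card_pos, hm]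
      exact Nat.succ_pos m
    obtain ⟨κ, hκ⟩ := hne
    have hτκ : τ κ = 1 := (Finset.mem_filter.1 hκ).2
    have e1 : c (Function.update τ κ 0) = c τ := h κ τ hτκ
    have hset : Finset.univ.filter (fun j => Function.update τ κ 0 j = 1) =
        (Finset.univ.filter (fun j => τ j = 1)).erase κ := by
      ext j
      simp only [Finset.mem_filter, Finset.mem_univ, true_and, Finset.mem_erase]
      by_cases hj : j = κ
      · subst hj; simp
      · rw [Function.update_of_ne hj]
        simp [hj]
    have e2 : (Finset.univ.filter (fun j => Function.update τ κ 0 j = 1)).card = m := by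
      rw [hset, Finset.card_erase_of_mem hκ, hm]
      rfl
    rw [← e1]
    exact ih _ e2

end Aux4
section Aux5
set_option linter.unusedSectionVars false
variable {n : ℕ} {L M : Finset (Fin n)} {B : Type*} [Ring B] [Algebra ℂ B] [StarRing B]
  [StarModule ℂ B]

lemma entry_eq {X Y : Matrix (Jidx L M) (Jidx L M) B} (hXY : X = Y) (σ τ : Jidx L M) :
    X σ τ = Y σ τ := by rw [hXY]

lemma star_scalarMat_mul_self {v : B} (hv1 : star v * v = 1) :
    star (scalarMat L M v) * scalarMat L M v = (1 : Matrix (Jidx L M) (Jidx L M) B) := by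
  rw [star_scalarMat, scalarMat_mul, hv1, scalarMat_one]

lemma comp_XX {k : Fin n} (h : k ∈ L ∪ M) {A : Matrix (Jidx L M) (Jidx L M) B}
    (hA : IsUD A) {v : B} (hv1 : star v * v = 1) :
    star (A * Ek L M k * scalarMat L M v) * (A * Ek L M k * scalarMat L M v) =
      Pj L M ⟨k, h⟩ 1 := by
  simp only [Matrix.star_mul, mul_assoc]
  rw [← mul_assoc (star A), hA.star_mul_self, one_mul]
  rw [← mul_assoc (star (Ek L M k)), starEk_mul_Ek h]
  rw [← scalarMat_comm_Pj, ← mul_assoc, star_scalarMat_mul_self hv1, one_mul]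

lemma comp_XY {k : Fin n} (h : k ∈ L ∪ M) {A : Matrix (Jidx L M) (Jidx L M) B}
    (hA : IsUD A) (v : B) :
    star (A * Ek L M k * scalarMat L M v) * star (Ek L M k) = 0 := by
  obtain ⟨g, hg, hAd⟩ := hA.star_ud
  simp only [Matrix.star_mul]
  rw [mul_assoc, hAd, starEk_mul_diag_mul_starEk, mul_zero]

lemma comp_YX {k : Fin n} (h : k ∈ L ∪ M) {A : Matrix (Jidx L M) (Jidx L M) B}
    (hA : IsUD A) (v : B) :
    star (star (Ek L M k)) * (A * Ek L M k * scalarMat L M v) = 0 := by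
  obtain ⟨g, hg, hAd⟩ := hA
  rw [star_star, ← mul_assoc, ← mul_assoc, hAd, Ek_mul_diag_mul_Ek, zero_mul]

lemma comp_YY {k : Fin n} (h : k ∈ L ∪ M) :
    star (star (Ek L M k)) * star (Ek L M k) =
      (Pj L M ⟨k, h⟩ 0 : Matrix (Jidx L M) (Jidx L M) B) := by
  rw [star_star, Ek_mul_starEk h]

/-- `star S * S` for the `M`-branch inner operator `S`. -/
lemma M_SS {k : Fin n} (h : k ∈ L ∪ M) {A : Matrix (Jidx L M) (Jidx L M) B}
    (hA : IsUD A) {v : B} (hv1 : star v * v = 1) (a b : ℂ) :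
    star (a • (A * Ek L M k * scalarMat L M v) + b • star (Ek L M k)) *
      (a • (A * Ek L M k * scalarMat L M v) + b • star (Ek L M k)) =
      (star a * a) • Pj L M ⟨k, h⟩ 1 + (star b * b) • Pj L M ⟨k, h⟩ 0 :=
  star_expand a b (comp_XX h hA hv1) (comp_YY h) (comp_XY h hA v) (comp_YX h hA v)

lemma star_WS_WS {W S : Matrix (Jidx L M) (Jidx L M) B} (hW : IsUD W) :
    star (W * S) * (W * S) = star S * S := by
  rw [Matrix.star_mul, mul_assoc, ← mul_assoc (star W), hW.star_mul_self, one_mul]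

lemma comm_starT_T {C T : Matrix (Jidx L M) (Jidx L M) B} (h1 : C * T = T * C)
    (h2 : C * star T = star T * C) : C * (star T * T) = (star T * T) * C :=
  comm_mul h2 h1

lemma S_mul_Pj1 {k : Fin n} (h : k ∈ L ∪ M) (A : Matrix (Jidx L M) (Jidx L M) B)
    (v : B) (a b : ℂ) :
    (a • (A * Ek L M k * scalarMat L M v) + b • star (Ek L M k)) * Pj L M ⟨k, h⟩ 1 =
      a • (A * Ek L M k * scalarMat L M v) := by
  rw [add_mul, Matrix.smul_mul, Matrix.smul_mul, starEk_mul_Pj1 h, smul_zero, add_zero]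
  rw [mul_assoc (A * Ek L M k), scalarMat_comm_Pj, ← mul_assoc, mul_assoc A,
    Ek_mul_Pj1 h]

lemma S_mul_Pj0 {k : Fin n} (h : k ∈ L ∪ M) (A : Matrix (Jidx L M) (Jidx L M) B)
    (v : B) (a b : ℂ) :
    (a • (A * Ek L M k * scalarMat L M v) + b • star (Ek L M k)) * Pj L M ⟨k, h⟩ 0 =
      b • star (Ek L M k) := by
  rw [add_mul, Matrix.smul_mul, Matrix.smul_mul, starEk_mul_Pj0 h]
  rw [mul_assoc (A * Ek L M k), scalarMat_comm_Pj, ← mul_assoc, mul_assoc A,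
    Ek_mul_Pj0 h, mul_zero, zero_mul, smul_zero, zero_add]

lemma rel_of_comm_Ek {k : Fin n} (h : k ∈ L ∪ M) {c : Jidx L M → B}
    (hcomm : Matrix.diagonal c * Ek L M k = Ek L M k * Matrix.diagonal c) :
    ∀ τ : Jidx L M, τ ⟨k, h⟩ = 1 → c (Function.update τ ⟨k, h⟩ 0) = c τ := by
  intro τ hτ
  have hent := entry_eq hcomm (Function.update τ ⟨k, h⟩ 0) τ
  rw [Matrix.diagonal_mul, Matrix.mul_diagonal, Ek_apply h, if_pos ⟨hτ, rfl⟩,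
    mul_one, one_mul] at hent
  exact hent

lemma rel_of_comm_starEk {k : Fin n} (h : k ∈ L ∪ M) {c : Jidx L M → B}
    (hcomm : Matrix.diagonal c * star (Ek L M k) =
      star (Ek L M k) * Matrix.diagonal c) :
    ∀ τ : Jidx L M, τ ⟨k, h⟩ = 1 → c (Function.update τ ⟨k, h⟩ 0) = c τ := by
  intro τ hτ
  have hent := entry_eq hcomm τ (Function.update τ ⟨k, h⟩ 0)
  rw [Matrix.diagonal_mul, Matrix.mul_diagonal, star_Ek_apply h, if_pos ⟨hτ, rfl⟩,
    mul_one, one_mul] at hent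
  exact hent.symm

lemma rel_of_comm_EkV {k : Fin n} (h : k ∈ L ∪ M) {c : Jidx L M → B} {v : B}
    (hcomm : Matrix.diagonal c * (Ek L M k * scalarMat L M v) =
      (Ek L M k * scalarMat L M v) * Matrix.diagonal c) :
    ∀ τ : Jidx L M, τ ⟨k, h⟩ = 1 → c (Function.update τ ⟨k, h⟩ 0) * v = v * c τ := by
  intro τ hτ
  have hent := entry_eq hcomm (Function.update τ ⟨k, h⟩ 0) τ
  rw [Matrix.diagonal_mul, Matrix.mul_diagonal, scalarMat, Matrix.mul_diagonal,
    Ek_apply h, if_pos ⟨hτ, rfl⟩, one_mul] at hent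
  exact hent

lemma comm_v_of {κ : {k : Fin n // k ∈ L ∪ M}} {c : Jidx L M → B} {v : B}
    (hupd : ∀ τ : Jidx L M, τ κ = 1 → c (Function.update τ κ 0) = c τ)
    (hraw : ∀ τ : Jidx L M, τ κ = 1 → c (Function.update τ κ 0) * v = v * c τ) :
    ∀ τ : Jidx L M, c τ * v = v * c τ := by
  intro τ
  rcases fin2_cases (τ κ) with h0 | h0
  · have hτ' : (Function.update τ κ 1) κ = 1 := by simp
    have e : Function.update (Function.update τ κ 1) κ 0 = τ := by
      funext j
      by_cases hj : j = κ
      · subst hj; simp [h0]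
      · simp [Function.update_of_ne hj]
    have h1 := hraw _ hτ'
    have h2 := hupd _ hτ'
    rw [e] at h1 h2
    rw [← h2] at h1
    exact h1
  · have h1 := hraw _ h0
    have h2 := hupd _ h0
    rw [h2] at h1
    exact h1

lemma rel_of_comm_scalarMat {c : Jidx L M → B} {v : B}
    (hcomm : Matrix.diagonal c * scalarMat L M v =
      scalarMat L M v * Matrix.diagonal c) :
    ∀ σ : Jidx L M, c σ * v = v * c σ := by
  intro σ
  have hent := entry_eq hcomm σ σ
  rw [scalarMat, Matrix.diagonal_mul_diagonal, Matrix.diagonal_mul_diagonal,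
    Matrix.diagonal_apply_eq, Matrix.diagonal_apply_eq] at hent
  exact hent

end Aux5
section Aux6
set_option linter.unusedSectionVars false
variable {n : ℕ} {L M : Finset (Fin n)} {B : Type*} [Ring B] [Algebra ℂ B] [StarRing B]
  [StarModule ℂ B]

/-- `z` and `star z` both commute with `b`. -/
def GoodE (b z : B) : Prop := Commute b z ∧ Commute b (star z)

lemma goodE_zero {b : B} : GoodE b 0 := ⟨Commute.zero_right b, by rw [star_zero]; exact Commute.zero_right b⟩

lemma goodE_one {b : B} : GoodE b 1 := ⟨Commute.one_right b, by rw [star_one]; exact Commute.one_right b⟩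

lemma GoodE.add {b z w : B} (hz : GoodE b z) (hw : GoodE b w) : GoodE b (z + w) :=
  ⟨hz.1.add_right hw.1, by rw [star_add]; exact hz.2.add_right hw.2⟩

lemma GoodE.mul {b z w : B} (hz : GoodE b z) (hw : GoodE b w) : GoodE b (z * w) :=
  ⟨hz.1.mul_right hw.1, by rw [StarMul.star_mul]; exact hw.2.mul_right hz.2⟩

lemma goodE_algebraMap {b : B} (c : ℂ) : GoodE b (algebraMap ℂ B c) := by
  constructor
  · exact (Algebra.commutes c b).symm
  · rw [← algebraMap_star_comm]
    exact (Algebra.commutes (star c) b).symm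

lemma GoodE.smul {b z : B} (c : ℂ) (hz : GoodE b z) : GoodE b (c • z) := by
  rw [Algebra.smul_def]
  exact (goodE_algebraMap c).mul hz

lemma GoodE.star' {b z : B} (hz : GoodE b z) : GoodE b (star z) :=
  ⟨hz.2, by rw [star_star]; exact hz.1⟩

lemma goodE_sum {b : B} {ι : Type*} (s : Finset ι) (f : ι → B)
    (h : ∀ i ∈ s, GoodE b (f i)) : GoodE b (∑ i ∈ s, f i) := by
  constructor
  · exact Commute.sum_right _ _ _ (fun i hi => (h i hi).1)
  · rw [star_sum]
    exact Commute.sum_right _ _ _ (fun i hi => (h i hi).2)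

/-- All entries of `Z` are `GoodE` for `b`. -/
def GoodM (b : B) (Z : Matrix (Jidx L M) (Jidx L M) B) : Prop :=
  ∀ σ τ : Jidx L M, GoodE b (Z σ τ)

lemma gm_zero {b : B} : GoodM b (0 : Matrix (Jidx L M) (Jidx L M) B) :=
  fun _ _ => goodE_zero

lemma gm_one {b : B} : GoodM b (1 : Matrix (Jidx L M) (Jidx L M) B) := by
  intro σ τ
  rw [Matrix.one_apply]
  split_ifs
  · exact goodE_one
  · exact goodE_zero

lemma GoodM.add {b : B} {Z W : Matrix (Jidx L M) (Jidx L M) B} (hZ : GoodM b Z)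
    (hW : GoodM b W) : GoodM b (Z + W) := by
  intro σ τ
  rw [Matrix.add_apply]
  exact (hZ σ τ).add (hW σ τ)

lemma GoodM.mul {b : B} {Z W : Matrix (Jidx L M) (Jidx L M) B} (hZ : GoodM b Z)
    (hW : GoodM b W) : GoodM b (Z * W) := by
  intro σ τ
  rw [Matrix.mul_apply]
  exact goodE_sum _ _ (fun ρ _ => (hZ σ ρ).mul (hW ρ τ))

lemma GoodM.smul {b : B} (c : ℂ) {Z : Matrix (Jidx L M) (Jidx L M) B} (hZ : GoodM b Z) :
    GoodM b (c • Z) := by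
  intro σ τ
  rw [Matrix.smul_apply]
  exact (hZ σ τ).smul c

lemma GoodM.star' {b : B} {Z : Matrix (Jidx L M) (Jidx L M) B} (hZ : GoodM b Z) :
    GoodM b (star Z) := by
  intro σ τ
  rw [Matrix.star_apply]
  exact (hZ τ σ).star'

lemma gm_Ek {b : B} (k : Fin n) : GoodM b (Ek L M k : Matrix (Jidx L M) (Jidx L M) B) := by
  by_cases h : k ∈ L ∪ M
  · intro σ τ
    rw [Ek_apply h]
    split_ifs
    · exact goodE_one
    · exact goodE_zero
  · rw [Ek, dif_neg h]
    exact gm_zero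

lemma gm_scalarMat {b w : B} (hw : GoodE b w) : GoodM b (scalarMat L M w) := by
  intro σ τ
  rw [scalarMat, Matrix.diagonal_apply]
  split_ifs
  · exact hw
  · exact goodE_zero

lemma gm_listProd {b : B} (f : Fin n → Matrix (Jidx L M) (Jidx L M) B) :
    ∀ l : List (Fin n), (∀ k ∈ l, GoodM b (f k)) → GoodM b ((l.map f).prod)
  | [], _ => by simpa using gm_one
  | k :: l, h => by
    rw [List.map_cons, List.prod_cons]
    exact (h k (by simp)).mul (gm_listProd f l (fun j hj => h j (List.mem_cons_of_mem _ hj)))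

lemma gm_prodOver {b : B} {s : Finset (Fin n)} {f : Fin n → Matrix (Jidx L M) (Jidx L M) B}
    (h : ∀ k ∈ s, GoodM b (f k)) : GoodM b (prodOver s f) := by
  rw [prodOver]
  exact gm_listProd f _ (fun k hk => h k ((Finset.mem_sort _).1 hk))

lemma goodM_carOp {b : B} (Θ : Matrix (Fin n) (Fin n) ℝ) (x : Fin n → ℝ)
    (v : Fin n → B) (i : Fin n) (hv : i ∉ L → GoodE b (v i)) :
    GoodM b (carOp L M Θ x v i) := by
  rw [carOp]
  split_ifs with h1 h2
  · exact (gm_prodOver (fun k _ => ((gm_Ek k).mul (gm_Ek k).star').add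
      (((gm_Ek k).star'.mul (gm_Ek k)).smul _))).mul (gm_Ek i)
  · exact ((gm_prodOver (fun k _ => ((gm_Ek k).mul (gm_Ek k).star').add
      (((gm_Ek k).star'.mul (gm_Ek k)).smul _))).mul
      (gm_prodOver (fun k _ => ((gm_Ek k).star'.mul (gm_Ek k)).add
        (((gm_Ek k).mul (gm_Ek k).star').smul _)))).mul
      (((((gm_prodOver (fun k _ => ((gm_Ek k).star'.mul (gm_Ek k)).add
        (((gm_Ek k).mul (gm_Ek k).star').smul _))).mul (gm_Ek i)).mul
        (gm_scalarMat (hv h1))).smul _).add (((gm_Ek i).star').smul _))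
  · exact ((gm_prodOver (fun k _ => ((gm_Ek k).mul (gm_Ek k).star').add
      (((gm_Ek k).star'.mul (gm_Ek k)).smul _))).mul
      (gm_prodOver (fun k _ => ((gm_Ek k).star'.mul (gm_Ek k)).add
        (((gm_Ek k).mul (gm_Ek k).star').smul _)))).mul
      ((gm_scalarMat (hv h1)).smul _)

lemma scalarC_comm {b : B} {Z : Matrix (Jidx L M) (Jidx L M) B} (hZ : GoodM b Z) :
    scalarMat L M b * Z = Z * scalarMat L M b := by
  ext σ τ
  rw [scalarMat, Matrix.diagonal_mul, Matrix.mul_diagonal]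
  exact (hZ σ τ).1

end Aux6
section Aux7
set_option linter.unusedSectionVars false
variable {n : ℕ} {L M : Finset (Fin n)} {B : Type*} [Ring B] [Algebra ℂ B] [StarRing B]
  [StarModule ℂ B]

lemma isUD_prefactorM' {s : Finset (Fin n)} (hs : s ⊆ M) (c : Fin n → ℂ)
    (hc : ∀ j, c j * star (c j) = 1) :
    IsUD (prodOver s (fun k => star (Ek L M k) * Ek L M k +
      c k • (Ek L M k * star (Ek L M k))) : Matrix (Jidx L M) (Jidx L M) B) :=
  isUD_prodOver (fun k hk => isUD_factorM (Finset.mem_union_right _ (hs hk)) (hc k))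

lemma exp_unit_numpi (r : ℂ) (hr : (starRingEnd ℂ) r = r) (θ : ℝ) :
    Complex.exp (r * Real.pi * Complex.I * (θ : ℂ)) *
      star (Complex.exp (r * Real.pi * Complex.I * (θ : ℂ))) = 1 := by
  apply exp_unit
  rw [Complex.star_def]
  simp only [_root_.map_mul, Complex.conj_I, Complex.conj_ofReal, hr]
  ring

lemma comm_star_of_comm {u cc : B} (h1 : star u * u = 1) (h2 : u * star u = 1)
    (hc : cc * u = u * cc) : cc * star u = star u * cc := by
  calc cc * star u = star u * u * (cc * star u) := by rw [h1, one_mul]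
    _ = star u * (u * cc * star u) := by rw [mul_assoc, ← mul_assoc u]
    _ = star u * (cc * u * star u) := by rw [hc]
    _ = star u * (cc * (u * star u)) := by rw [mul_assoc cc]
    _ = star u * cc := by rw [h2, mul_one]

lemma stepA_M {k : Fin n} (hk : k ∈ L ∪ M) {C W A : Matrix (Jidx L M) (Jidx L M) B}
    {vk : B} (hW : IsUD W) (hA : IsUD A) (hv1 : star vk * vk = 1)
    {a b : ℂ} (hab : star a * a ≠ star b * b)
    (hT : C * (W * (a • (A * Ek L M k * scalarMat L M vk) + b • star (Ek L M k))) =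
      (W * (a • (A * Ek L M k * scalarMat L M vk) + b • star (Ek L M k))) * C)
    (hT2 : C * star (W * (a • (A * Ek L M k * scalarMat L M vk) + b • star (Ek L M k))) =
      star (W * (a • (A * Ek L M k * scalarMat L M vk) + b • star (Ek L M k))) * C) :
    C * Pj L M ⟨k, hk⟩ 1 = Pj L M ⟨k, hk⟩ 1 * C := by
  have hTT := comm_starT_T hT hT2
  rw [star_WS_WS hW, M_SS hk hA hv1 a b, Pj0_eq_one_sub] at hTT
  exact comm_of_combo hab hTT

lemma stepC_M {k : Fin n} (hk : k ∈ L ∪ M) {C W A : Matrix (Jidx L M) (Jidx L M) B}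
    {c : Jidx L M → B} (hdiag : C = Matrix.diagonal c) {vk : B}
    (hW : IsUD W) (hA : IsUD A) {a b : ℂ} (ha : a ≠ 0) (hb : b ≠ 0)
    (hT : C * (W * (a • (A * Ek L M k * scalarMat L M vk) + b • star (Ek L M k))) =
      (W * (a • (A * Ek L M k * scalarMat L M vk) + b • star (Ek L M k))) * C) :
    (∀ τ : Jidx L M, τ ⟨k, hk⟩ = 1 → c (Function.update τ ⟨k, hk⟩ 0) = c τ) ∧
    (∀ τ : Jidx L M, c τ * vk = vk * c τ) := by
  subst hdiag
  have hCW : Matrix.diagonal c * W = W * Matrix.diagonal c := (hW.commute_diagonal c).symm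
  have hCS := cancel_left hW hCW hT
  have hCP1 : Matrix.diagonal c * Pj L M ⟨k, hk⟩ 1 =
      Pj L M ⟨k, hk⟩ 1 * Matrix.diagonal c := (Pj_comm_diagonal _ _ c).symm
  have hCP0 : Matrix.diagonal c * Pj L M ⟨k, hk⟩ 0 =
      Pj L M ⟨k, hk⟩ 0 * Matrix.diagonal c := (Pj_comm_diagonal _ _ c).symm
  have h1 := comm_mul hCS hCP1
  rw [S_mul_Pj1 hk A vk a b] at h1
  have h1' := smul_comm_cancel ha h1
  rw [mul_assoc] at h1'
  have hCA : Matrix.diagonal c * A = A * Matrix.diagonal c := (hA.commute_diagonal c).symm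
  have hEV := cancel_left hA hCA h1'
  have h0 := comm_mul hCS hCP0
  rw [S_mul_Pj0 hk A vk a b] at h0
  have hE' := smul_comm_cancel hb h0
  have hupd := rel_of_comm_starEk hk hE'
  have hraw := rel_of_comm_EkV hk hEV
  exact ⟨hupd, comm_v_of hupd hraw⟩

end Aux7
set_option maxHeartbeats 2000000 in
theorem stmt9 {H : Type*} [NormedAddCommGroup H] [InnerProductSpace ℂ H] [CompleteSpace H]
    (L M R : Finset (Fin n))
    (hLM : Disjoint L M) (hLR : Disjoint L R) (hMR : Disjoint M R)
    (hcover : L ∪ M ∪ R = Finset.univ)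
    (Θ : Matrix (Fin n) (Fin n) ℝ) (hΘ : Θᵀ = -Θ)
    (v : Fin n → (H →L[ℂ] H))
    (hvu : ∀ i ∈ M ∪ R, v i ∈ unitary (H →L[ℂ] H))
    (hvcomm : ∀ i ∈ M ∪ R, ∀ j ∈ M ∪ R, v i * v j =
      Complex.exp (-(2 * Real.pi * Complex.I * (SigMat M R Θ i j : ℂ))) • (v j * v i))
    (x : Fin n → ℝ) (hx : ∀ i ∈ M, 0 < x i ∧ x i < 1/2) :
    (∀ C : Matrix (Jidx L M) (Jidx L M) (H →L[ℂ] H),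
      (∀ i, C * carOp L M Θ x v i = carOp L M Θ x v i * C ∧
            C * star (carOp L M Θ x v i) = star (carOp L M Θ x v i) * C) ↔
      (∃ C' : H →L[ℂ] H, (∀ i ∈ M ∪ R, C' * v i = v i * C') ∧
        C = Matrix.diagonal (fun _ => C'))) ∧
    ((∀ C : Matrix (Jidx L M) (Jidx L M) (H →L[ℂ] H),
        (∀ i, C * carOp L M Θ x v i = carOp L M Θ x v i * C ∧
              C * star (carOp L M Θ x v i) = star (carOp L M Θ x v i) * C) →
        ∃ c : ℂ, C = c • 1) ↔
      (∀ C' : H →L[ℂ] H, (∀ i ∈ M ∪ R, C' * v i = v i * C') → ∃ c : ℂ, C' = c • 1)) := by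
  classical
  have hMR' : ∀ i, i ∉ L → i ∈ M ∪ R := by
    intro i hiL
    have : i ∈ L ∪ M ∪ R := by rw [hcover]; exact Finset.mem_univ i
    rcases Finset.mem_union.1 this with h' | h'
    · rcases Finset.mem_union.1 h' with h'' | h''
      · exact absurd h'' hiL
      · exact Finset.mem_union_left _ h''
    · exact Finset.mem_union_right _ h'
  have main : ∀ C : Matrix (Jidx L M) (Jidx L M) (H →L[ℂ] H),
      (∀ i, C * carOp L M Θ x v i = carOp L M Θ x v i * C ∧
            C * star (carOp L M Θ x v i) = star (carOp L M Θ x v i) * C) ↔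
      (∃ C' : H →L[ℂ] H, (∀ i ∈ M ∪ R, C' * v i = v i * C') ∧
        C = Matrix.diagonal (fun _ => C')) := by
    intro C
    constructor
    · -- FORWARD
      intro hC
      -- step A : C commutes with all the projections Pj κ 1
      have stepA : ∀ κ : {k : Fin n // k ∈ L ∪ M},
          C * Pj L M κ 1 = Pj L M κ 1 * C := by
        rintro ⟨k, hk⟩
        rcases Finset.mem_union.1 hk with hkL | hkM
        · have hT := (hC k).1
          have hT2 := (hC k).2
          simp only [carOp, if_pos hkL] at hT hT2
          have hTT := comm_starT_T hT hT2
          rw [star_WS_WS (isUD_prefactorL Θ k), starEk_mul_Ek hk] at hTT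
          exact hTT
        · have hkL : k ∉ L := fun hh => (Finset.disjoint_left.1 hLM hh) hkM
          have hT := (hC k).1
          have hT2 := (hC k).2
          simp only [carOp, if_neg hkL, if_pos hkM] at hT hT2
          have hxk := hx k hkM
          have hW : IsUD ((prodOver L (fun j => Ek L M j * star (Ek L M j) +
              Complex.exp (Real.pi * Complex.I * (Θ k j : ℂ)) •
                (star (Ek L M j) * Ek L M j))) *
              (prodOver (M.filter (· < k)) (fun j => star (Ek L M j) * Ek L M j +
              Complex.exp (2 * Real.pi * Complex.I * (Θ k j : ℂ)) •
                (Ek L M j * star (Ek L M j)))) :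
              Matrix (Jidx L M) (Jidx L M) (H →L[ℂ] H)) :=
            (isUD_prefactorL Θ k).mul (isUD_prefactorM' (Finset.filter_subset _ _) _
              (fun j => exp_unit_numpi 2 (map_ofNat _ 2) (Θ k j)))
          have hA : IsUD ((prodOver (M.filter (k ≤ ·)) (fun j =>
              star (Ek L M j) * Ek L M j +
              Complex.exp (4 * Real.pi * Complex.I * (Θ k j : ℂ)) •
                (Ek L M j * star (Ek L M j)))) :
              Matrix (Jidx L M) (Jidx L M) (H →L[ℂ] H)) :=
            isUD_prefactorM' (Finset.filter_subset _ _) _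
              (fun j => exp_unit_numpi 4 (map_ofNat _ 4) (Θ k j))
          have hv1 : star (v k) * v k = 1 :=
            (Unitary.mem_iff.1 (hvu k (Finset.mem_union_left R hkM))).1
          have ea : star ((Real.sqrt (x k) : ℂ)) * (Real.sqrt (x k) : ℂ) =
              ((x k : ℝ) : ℂ) := by
            rw [Complex.star_def, Complex.conj_ofReal, ← Complex.ofReal_mul,
              Real.mul_self_sqrt hxk.1.le]
          have eb : star ((Real.sqrt (1 - x k) : ℂ)) * (Real.sqrt (1 - x k) : ℂ) =
              (((1 - x k : ℝ)) : ℂ) := by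
            rw [Complex.star_def, Complex.conj_ofReal, ← Complex.ofReal_mul,
              Real.mul_self_sqrt (by linarith [hxk.2] : (0:ℝ) ≤ 1 - x k)]
          have hab : star ((Real.sqrt (x k) : ℂ)) * (Real.sqrt (x k) : ℂ) ≠
              star ((Real.sqrt (1 - x k) : ℂ)) * (Real.sqrt (1 - x k) : ℂ) := by
            rw [ea, eb]
            intro heq
            have := Complex.ofReal_inj.1 heq
            have hlt : x k < 1 - x k := by linarith [hxk.2]
            exact absurd this (ne_of_lt hlt)
          exact stepA_M hk hW hA hv1 hab hT hT2
      have hdiag : C = Matrix.diagonal (fun σ => C σ σ) := diagonal_of_comm stepA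
      -- step C : entry relations
      have hupd : ∀ (κ : {k : Fin n // k ∈ L ∪ M}) (τ : Jidx L M), τ κ = 1 →
          C (Function.update τ κ 0) (Function.update τ κ 0) = C τ τ := by
        rintro ⟨k, hk⟩
        rcases Finset.mem_union.1 hk with hkL | hkM
        · have hT := (hC k).1
          simp only [carOp, if_pos hkL] at hT
          have hP := isUD_prefactorL (L := L) (M := M) (B := H →L[ℂ] H) Θ k
          have hCP := (hP.commute_diagonal (fun σ => C σ σ)).symm
          rw [← hdiag] at hCP
          have hCE := cancel_left hP hCP hT
          rw [hdiag] at hCE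
          exact rel_of_comm_Ek hk hCE
        · have hkL : k ∉ L := fun hh => (Finset.disjoint_left.1 hLM hh) hkM
          have hT := (hC k).1
          simp only [carOp, if_neg hkL, if_pos hkM] at hT
          have hxk := hx k hkM
          have hW : IsUD ((prodOver L (fun j => Ek L M j * star (Ek L M j) +
              Complex.exp (Real.pi * Complex.I * (Θ k j : ℂ)) •
                (star (Ek L M j) * Ek L M j))) *
              (prodOver (M.filter (· < k)) (fun j => star (Ek L M j) * Ek L M j +
              Complex.exp (2 * Real.pi * Complex.I * (Θ k j : ℂ)) •
                (Ek L M j * star (Ek L M j)))) :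
              Matrix (Jidx L M) (Jidx L M) (H →L[ℂ] H)) :=
            (isUD_prefactorL Θ k).mul (isUD_prefactorM' (Finset.filter_subset _ _) _
              (fun j => exp_unit_numpi 2 (map_ofNat _ 2) (Θ k j)))
          have hA : IsUD ((prodOver (M.filter (k ≤ ·)) (fun j =>
              star (Ek L M j) * Ek L M j +
              Complex.exp (4 * Real.pi * Complex.I * (Θ k j : ℂ)) •
                (Ek L M j * star (Ek L M j)))) :
              Matrix (Jidx L M) (Jidx L M) (H →L[ℂ] H)) :=
            isUD_prefactorM' (Finset.filter_subset _ _) _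
              (fun j => exp_unit_numpi 4 (map_ofNat _ 4) (Θ k j))
          have ha : ((Real.sqrt (x k) : ℝ) : ℂ) ≠ 0 :=
            Complex.ofReal_ne_zero.2 (ne_of_gt (Real.sqrt_pos.2 hxk.1))
          have hb : ((Real.sqrt (1 - x k) : ℝ) : ℂ) ≠ 0 :=
            Complex.ofReal_ne_zero.2 (ne_of_gt (Real.sqrt_pos.2 (by linarith [hxk.2])))
          exact (stepC_M hk hdiag hW hA ha hb hT).1
      have hvM : ∀ k, k ∈ M → ∀ τ : Jidx L M, C τ τ * v k = v k * C τ τ := by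
        intro k hkM
        have hk : k ∈ L ∪ M := Finset.mem_union_right L hkM
        have hkL : k ∉ L := fun hh => (Finset.disjoint_left.1 hLM hh) hkM
        have hT := (hC k).1
        simp only [carOp, if_neg hkL, if_pos hkM] at hT
        have hxk := hx k hkM
        have hW : IsUD ((prodOver L (fun j => Ek L M j * star (Ek L M j) +
            Complex.exp (Real.pi * Complex.I * (Θ k j : ℂ)) •
              (star (Ek L M j) * Ek L M j))) *
            (prodOver (M.filter (· < k)) (fun j => star (Ek L M j) * Ek L M j +
            Complex.exp (2 * Real.pi * Complex.I * (Θ k j : ℂ)) •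
              (Ek L M j * star (Ek L M j)))) :
            Matrix (Jidx L M) (Jidx L M) (H →L[ℂ] H)) :=
          (isUD_prefactorL Θ k).mul (isUD_prefactorM' (Finset.filter_subset _ _) _
            (fun j => exp_unit_numpi 2 (map_ofNat _ 2) (Θ k j)))
        have hA : IsUD ((prodOver (M.filter (k ≤ ·)) (fun j =>
            star (Ek L M j) * Ek L M j +
            Complex.exp (4 * Real.pi * Complex.I * (Θ k j : ℂ)) •
              (Ek L M j * star (Ek L M j)))) :
            Matrix (Jidx L M) (Jidx L M) (H →L[ℂ] H)) :=
          isUD_prefactorM' (Finset.filter_subset _ _) _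
            (fun j => exp_unit_numpi 4 (map_ofNat _ 4) (Θ k j))
        have ha : ((Real.sqrt (x k) : ℝ) : ℂ) ≠ 0 :=
          Complex.ofReal_ne_zero.2 (ne_of_gt (Real.sqrt_pos.2 hxk.1))
        have hb : ((Real.sqrt (1 - x k) : ℝ) : ℂ) ≠ 0 :=
          Complex.ofReal_ne_zero.2 (ne_of_gt (Real.sqrt_pos.2 (by linarith [hxk.2])))
        exact (stepC_M hk hdiag hW hA ha hb hT).2
      have hvR : ∀ k, k ∉ L → k ∉ M → ∀ σ : Jidx L M, C σ σ * v k = v k * C σ σ := by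
        intro k hkL hkM
        have hT := (hC k).1
        simp only [carOp, if_neg hkL, if_neg hkM] at hT
        have hW : IsUD ((prodOver L (fun j => Ek L M j * star (Ek L M j) +
            Complex.exp (Real.pi * Complex.I * (Θ k j : ℂ)) •
              (star (Ek L M j) * Ek L M j))) *
            (prodOver M (fun j => star (Ek L M j) * Ek L M j +
            Complex.exp (2 * Real.pi * Complex.I * (Θ k j : ℂ)) •
              (Ek L M j * star (Ek L M j)))) :
            Matrix (Jidx L M) (Jidx L M) (H →L[ℂ] H)) :=
          (isUD_prefactorL Θ k).mul (isUD_prefactorM' (Finset.Subset.refl M) _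
            (fun j => exp_unit_numpi 2 (map_ofNat _ 2) (Θ k j)))
        have hCW := (hW.commute_diagonal (fun σ => C σ σ)).symm
        rw [← hdiag] at hCW
        have hCsV := cancel_left hW hCW hT
        have hs2 : ((Real.sqrt 2 : ℝ) : ℂ)⁻¹ ≠ 0 :=
          inv_ne_zero (Complex.ofReal_ne_zero.2 (by positivity))
        have hCV := smul_comm_cancel hs2 hCsV
        rw [hdiag] at hCV
        exact rel_of_comm_scalarMat hCV
      -- assemble
      have hconst := const_of_upd (c := fun σ => C σ σ) hupd
      refine ⟨C (fun _ => 0) (fun _ => 0), ?_, ?_⟩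
      · intro i hiMR
        rcases Finset.mem_union.1 hiMR with hiM | hiR
        · have h' := hvM i hiM (fun _ => 0)
          exact h'.symm ▸ h'
        · have hiL : i ∉ L := fun hh => (Finset.disjoint_left.1 hLR hh) hiR
          have hiM : i ∉ M := fun hh => (Finset.disjoint_left.1 hMR hh) hiR
          exact hvR i hiL hiM (fun _ => 0)
      · exact hdiag.trans (congrArg Matrix.diagonal (funext fun σ => hconst σ))
    · -- REVERSE
      rintro ⟨C', hC', rfl⟩
      intro i
      have hGood : GoodM C' (carOp L M Θ x v i) := by
        apply goodM_carOp
        intro hiL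
        have hiMR := hMR' i hiL
        have hu := Unitary.mem_iff.1 (hvu i hiMR)
        exact ⟨hC' i hiMR, comm_star_of_comm hu.1 hu.2 (hC' i hiMR)⟩
      have hsc : (Matrix.diagonal (fun _ => C') :
          Matrix (Jidx L M) (Jidx L M) (H →L[ℂ] H)) = scalarMat L M C' := rfl
      rw [hsc]
      exact ⟨scalarC_comm hGood, scalarC_comm hGood.star'⟩
  refine ⟨main, ?_⟩
  constructor
  · intro Hmat C' hC'
    have hcomm := (main (Matrix.diagonal fun _ => C')).2 ⟨C', hC', rfl⟩
    obtain ⟨cc, hcc⟩ := Hmat _ hcomm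
    refine ⟨cc, ?_⟩
    have hent := entry_eq hcc (fun _ => (0 : Fin 2)) (fun _ => (0 : Fin 2))
    rw [Matrix.diagonal_apply_eq, Matrix.smul_apply, Matrix.one_apply_eq] at hent
    exact hent
  · intro Hop C hC
    obtain ⟨C', hC', rfl⟩ := (main C).1 hC
    obtain ⟨cc, rfl⟩ := Hop C' hC'
    refine ⟨cc, ?_⟩
    ext σ τ
    rw [Matrix.diagonal_apply, Matrix.smul_apply, Matrix.one_apply]
    split_ifs
    · rfl
    · rw [smul_zero]
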